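/- Let x be a strong sink of a tilted algebra C admitting a rightmost complete slice Σ⁺. Then x is a strong sink if and only if the injective module I_x is a source of Σ⁺. -/

import Mathlib

/-!
STATEMENT 7 (Lemma 3.1): Let `C` be a tilted algebra admitting a rightmost complete slice
`Σ⁺`.  A point `x` of `C` is a strong sink if and only if the injective `I_x` is a source
of `Σ⁺`.

Abstract setup: `Ind` is the set of (iso-classes of) indecomposable `C`-modules with the
path order `≤`.  `Inj ⊆ Ind` is the set of indecomposable injective modules, and
`S ⊆ Ind` is the rightmost complete slice `Σ⁺`: a finite, sincere, convex subset in which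
every source is injective.  `x` being a strong sink means that the injective `Ix` has no
injective proper predecessor; `Ix` being a source of `Σ⁺` means `Ix ∈ Σ⁺` and no element
of `Σ⁺` properly precedes it.
-/

theorem strong_sink_iff_injective_source_of_rightmost_slice
    {Ind : Type*} [PartialOrder Ind]
    (Inj S : Set Ind)
    -- `Σ⁺` is finite
    (hfin : S.Finite)
    -- `Σ⁺` is sincere: every injective receives a morphism from the slice
    (hsincere : ∀ J ∈ Inj, ∃ L ∈ S, L ≤ J)
    -- `Σ⁺` is convex in `ind C`
    (hconvex : ∀ L ∈ S, ∀ N ∈ S, ∀ X : Ind, L ≤ X → X ≤ N → X ∈ S)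
    -- `Σ⁺` is rightmost: every source of `Σ⁺` is injective
    (hrightmost : ∀ s ∈ S, (∀ N ∈ S, ¬ N < s) → s ∈ Inj)
    -- the injective module `I_x` at the point `x`
    (Ix : Ind) (hIx : Ix ∈ Inj) :
    -- `x` is a strong sink  ↔  `I_x` is an (injective) source of `Σ⁺`
    (∀ J ∈ Inj, ¬ J < Ix) ↔ (Ix ∈ S ∧ ∀ N ∈ S, ¬ N < Ix) := by
  constructor
  · intro hsink
    obtain ⟨L, hLS, hLIx⟩ := hsincere Ix hIx
    have hT : ({N ∈ S | N ≤ Ix} : Set Ind).Finite := hfin.subset (fun N hN => hN.1)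
    obtain ⟨M, ⟨hMS, hMIx⟩, hmin⟩ := hT.exists_minimalFor id _ ⟨L, hLS, hLIx⟩
    have hsrc : ∀ N ∈ S, ¬ N < M := by
      intro N hNS hNM
      have := hmin (j := N) ⟨hNS, le_trans hNM.le hMIx⟩ hNM.le
      exact absurd this (not_le_of_gt hNM)
    have hMInj := hrightmost M hMS hsrc
    have hME : M = Ix := by
      rcases eq_or_lt_of_le hMIx with h | h
      · exact h
      · exact absurd h (hsink M hMInj)
    subst hME
    exact ⟨hMS, hsrc⟩
  · rintro ⟨hIxS, hsrc⟩ J hJ hJIx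
    obtain ⟨L, hLS, hLJ⟩ := hsincere J hJ
    exact hsrc J (hconvex L hLS Ix hIxS J hLJ hJIx.le) hJIx
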